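/- Let n ≥ 2, κ > 1, p̂ ∈ [0,1], and p ∈ (0,1). Then p lies in the interval [c − r, c + r] (with c, r as in the proposed CI) if and only if the quadratic inequality n(p̂ − p)²/(p(1−p)) − (p̂/p + (1−p̂)/(1−p) − 2) ≤ κ holds. -/

import Mathlib

theorem stmt_4 (n : ℕ) (hn : 2 ≤ n) (κ : ℝ) (hκ : 1 < κ)
    (phat : ℝ) (hp0 : 0 ≤ phat) (hp1 : phat ≤ 1) (qhat : ℝ) (hq : qhat = 1 - phat)
    (p : ℝ) (hp : 0 < p) (hp' : p < 1) (c r : ℝ)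
    (hc : c = ((n - 1) * phat + (κ - 1) / 2) / (n + κ - 2))
    (hr : r = Real.sqrt (n * κ * phat * qhat + (κ - 1) ^ 2 / 4 - phat * qhat) / (n + κ - 2)) :
    (c - r ≤ p ∧ p ≤ c + r) ↔
      (n : ℝ) * (phat - p) ^ 2 / (p * (1 - p)) - (phat / p + (1 - phat) / (1 - p) - 2) ≤ κ := by
  have hn' : (2:ℝ) ≤ (n:ℝ) := by exact_mod_cast hn
  have hA : (0:ℝ) < (n:ℝ) + κ - 2 := by linarith
  have hq0 : 0 ≤ phat * qhat := by rw [hq]; nlinarith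
  have hnk : (0:ℝ) ≤ (n:ℝ) * κ - 1 := by nlinarith
  have hD : 0 ≤ (n:ℝ) * κ * phat * qhat + (κ - 1) ^ 2 / 4 - phat * qhat := by
    have h1 : 0 ≤ ((n:ℝ) * κ - 1) * (phat * qhat) := mul_nonneg hnk hq0
    nlinarith [sq_nonneg (κ - 1)]
  have hr0 : 0 ≤ r := by rw [hr]; positivity
  have hr2 : r ^ 2 = ((n:ℝ) * κ * phat * qhat + (κ - 1) ^ 2 / 4 - phat * qhat)
      / ((n:ℝ) + κ - 2) ^ 2 := by
    rw [hr, div_pow, Real.sq_sqrt hD]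
  have hcA : ((n:ℝ) + κ - 2) * c = ((n:ℝ) - 1) * phat + (κ - 1) / 2 := by
    rw [hc]; field_simp
  have hp1' : 0 < 1 - p := by linarith
  have hpp : 0 < p * (1 - p) := mul_pos hp hp1'
  set Q : ℝ := ((n:ℝ) + κ - 2) * p ^ 2 - (2 * ((n:ℝ) - 1) * phat + (κ - 1)) * p
      + phat * ((n:ℝ) * phat - 1) with hQ
  clear_value Q
  have hid : ((n:ℝ) + κ - 2) ^ 2 * (p - c) ^ 2
      = ((n:ℝ) + κ - 2) * Q
        + ((n:ℝ) * κ * phat * qhat + (κ - 1) ^ 2 / 4 - phat * qhat) := by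
    rw [hq, hQ]
    linear_combination (((n:ℝ) + κ - 2) * c + (((n:ℝ) - 1) * phat + (κ - 1) / 2)
      - 2 * ((n:ℝ) + κ - 2) * p) * hcA
  have hA2 : (0:ℝ) < ((n:ℝ) + κ - 2) ^ 2 := by positivity
  have hiff1 : (c - r ≤ p ∧ p ≤ c + r) ↔ Q ≤ 0 := by
    constructor
    · rintro ⟨h1, h2⟩
      have h3 : (p - c) ^ 2 ≤ r ^ 2 :=
        sq_le_sq' (by linarith) (by linarith)
      rw [hr2] at h3
      have h4 : (p - c) ^ 2 * ((n:ℝ) + κ - 2) ^ 2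
          ≤ (n:ℝ) * κ * phat * qhat + (κ - 1) ^ 2 / 4 - phat * qhat :=
        (le_div_iff₀ hA2).mp h3
      have h5 : ((n:ℝ) + κ - 2) * Q ≤ ((n:ℝ) + κ - 2) * 0 := by
        rw [mul_zero]; linarith [hid, h4]
      exact (mul_le_mul_iff_right₀ hA).mp h5
    · intro hQ0
      have h6 : ((n:ℝ) + κ - 2) * Q ≤ 0 :=
        mul_nonpos_iff.mpr (Or.inl ⟨hA.le, hQ0⟩)
      have h4 : (p - c) ^ 2 ≤ r ^ 2 := by
        rw [hr2, le_div_iff₀ hA2]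
        linarith [hid, h6]
      obtain ⟨ha, hb⟩ := abs_le_of_sq_le_sq' h4 hr0
      constructor <;> linarith
  have heq : (n:ℝ) * (phat - p) ^ 2 / (p * (1 - p))
      - (phat / p + (1 - phat) / (1 - p) - 2) - κ = Q / (p * (1 - p)) := by
    rw [hQ]
    field_simp
    ring
  rw [hiff1]
  constructor
  · intro hQ0
    have h7 : Q / (p * (1 - p)) ≤ 0 := div_nonpos_of_nonpos_of_nonneg hQ0 hpp.le
    rw [← heq] at h7
    linarith
  · intro hstat
    have h5 : Q / (p * (1 - p)) ≤ 0 := by rw [← heq]; linarith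
    have h8 := (div_le_iff₀ hpp).mp h5
    linarith [h8]
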